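/- Let A be a coin sequence containing at least one 1 and let A' be the sequence obtained from A by deleting every maximal block of consecutive 0's of even length and concatenating adjacent blocks of 1's. If (h_0, h_1, …, h_n) are the lengths of the successive maximal blocks of 1's in A' (so A' = 1^{h_0} 0 1^{h_1} 0 ⋯ 0 1^{h_n} with single 0's separating them), then S(A) = h_0 + Σ_{i=1}^n (−1)^i h_i − (n mod 2). -/

import Mathlib

/-- Signed sum of the `true` entries of a list, the sign toggling at each `false`. -/
def signedSum : ℤ → List Bool → ℤ
  | _, [] => 0
  | s, (true :: l) => s + signedSum s l
  | s, (false :: l) => signedSum (-s) l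

/-- The parity sum `S(A) = h₀ + ∑_{i=1}^n (-1)^{pᵢ} hᵢ - pₙ`, where
`A = 1^{h₀} 0^{t₁} 1^{h₁} ⋯ 0^{tₙ} 1^{hₙ}` and `pᵢ ≡ t₁ + ⋯ + tᵢ (mod 2)`. -/
def pS (A : List Bool) : ℤ :=
  signedSum 1 A - ((A.count false % 2 : ℕ) : ℤ)

/-- Delete every maximal block of consecutive `0`s of even length, merging the
adjacent blocks of `1`s (each maximal block of `0`s is reduced modulo 2). -/
def squash : List Bool → List Bool
  | [] => []
  | true :: l => true :: squash l
  | false :: false :: l => squash l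
  | false :: l => false :: squash l

/-- The sequence `1^{h 0} 0 1^{h 1} 0 ⋯ 0 1^{h n}` with single `0`s as separators. -/
def buildOnes (n : ℕ) (h : ℕ → ℕ) : List Bool :=
  List.replicate (h 0) true ++
    ((List.range n).map (fun i => false :: List.replicate (h (i + 1)) true)).flatten

lemma signedSum_squash (A : List Bool) (s : ℤ) :
    signedSum s (squash A) = signedSum s A := by
  induction A using squash.induct generalizing s with
  | case1 => rfl
  | case2 l ih => simp [squash, signedSum, ih]
  | case3 l ih => simp [squash, signedSum, ih]
  | case4 l h ih => cases l with
    | nil => rfl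
    | cons b l => cases b <;> simp_all [squash, signedSum]

lemma count_false_squash (A : List Bool) :
    (squash A).count false % 2 = A.count false % 2 := by
  induction A using squash.induct with
  | case1 => rfl
  | case2 l ih => simpa [squash] using ih
  | case3 l ih => rw [squash]; simp [List.count_cons]; omega
  | case4 l h ih => cases l with
    | nil => rfl
    | cons b l => cases b <;> simp_all [squash, List.count_cons, Nat.add_mod]

lemma signedSum_append (l m : List Bool) (s : ℤ) :
    signedSum s (l ++ m) = signedSum s l + signedSum ((-1) ^ l.count false * s) m := by
  induction l generalizing s with
  | nil => simp [signedSum]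
  | cons b l ih =>
    have hc : ((-1:ℤ)) ^ (l.count false + 1) = -(-1) ^ l.count false := by ring
    cases b
    · rw [List.cons_append]
      show signedSum (-s) (l ++ m) = signedSum (-s) l + _
      rw [ih, List.count_cons]
      simp [hc]
    · rw [List.cons_append]
      show s + signedSum s (l ++ m) = s + signedSum s l + _
      rw [ih, List.count_cons]
      simp; ring
  
lemma signedSum_replicate (k : ℕ) (s : ℤ) :
    signedSum s (List.replicate k true) = k * s := by
  induction k with
  | zero => simp [signedSum]
  | succ k ih => simp [List.replicate_succ, signedSum, ih]; ring

lemma buildOnes_succ (n : ℕ) (h : ℕ → ℕ) :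
    buildOnes (n + 1) h = buildOnes n h ++ (false :: List.replicate (h (n + 1)) true) := by
  simp [buildOnes, List.range_succ, List.append_assoc]

lemma count_false_buildOnes (n : ℕ) (h : ℕ → ℕ) :
    (buildOnes n h).count false = n := by
  induction n with
  | zero => simp [buildOnes, List.count_replicate]
  | succ n ih => simp [buildOnes_succ, List.count_append, ih, List.count_cons,
      List.count_replicate]

lemma signedSum_buildOnes (n : ℕ) (h : ℕ → ℕ) :
    signedSum 1 (buildOnes n h) =
      (h 0 : ℤ) + ∑ i ∈ Finset.Icc 1 n, (-1 : ℤ) ^ i * (h i : ℤ) := by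
  induction n with
  | zero => simp [buildOnes, signedSum_replicate]
  | succ n ih =>
    rw [buildOnes_succ, signedSum_append, ih, count_false_buildOnes,
      Finset.sum_Icc_succ_top (by omega : 1 ≤ n + 1)]
    simp [signedSum, signedSum_replicate, pow_succ]
    ring

theorem pS_eq_alternating_sum (A : List Bool) (hA : true ∈ A)
    (n : ℕ) (h : ℕ → ℕ) (hsq : squash A = buildOnes n h) :
    pS A = (h 0 : ℤ) + (∑ i ∈ Finset.Icc 1 n, (-1 : ℤ) ^ i * (h i : ℤ)) - ((n % 2 : ℕ) : ℤ) := by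
  have h1 := signedSum_squash A 1
  have h2 := count_false_squash A
  rw [hsq] at h1 h2
  rw [count_false_buildOnes] at h2
  rw [pS, ← h1, ← h2, signedSum_buildOnes]
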